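/- Let γ ~ F on [0,1] with density f, and let s > 1, 0 < t < 1 be constants with F((s−1)/s) ≤ (t/(1−t))·E[γ]. Then F((s−1)/s) + ((s−1)/s)·∫_{(s−1)/s}^1 z f(z) dz ≤ ((s−t)/((1−t)(s−1)))·E[γ]. -/
import Mathlib


/-- Central inequality in the proof of Theorem 4.1: for `γ ~ F` on `[0,1]` with
density `f`, `s > 1`, `0 < t < 1`, and `F((s−1)/s) ≤ (t/(1−t))·E[γ]`, one has
`F((s−1)/s) + ((s−1)/s)·∫_{(s−1)/s}^1 z f(z) dz ≤ ((s−t)/((1−t)(s−1)))·E[γ]`. -/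
theorem central_utility_inequality
    (F f : ℝ → ℝ) (s t : ℝ)
    (hs : 1 < s) (ht0 : 0 < t) (ht1 : t < 1)
    (hfnonneg : ∀ x ∈ Set.Icc (0:ℝ) 1, 0 ≤ f x)
    (hfcont : ContinuousOn f (Set.Icc 0 1))
    (hftot : (∫ x in (0:ℝ)..1, f x) = 1)
    (hF : ∀ u : ℝ, F u = ∫ x in (0:ℝ)..u, f x)
    (hcond : F ((s - 1) / s) ≤ (t / (1 - t)) * ∫ z in (0:ℝ)..1, z * f z) :
    F ((s - 1) / s) + ((s - 1) / s) * ∫ z in ((s - 1) / s)..1, z * f z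
      ≤ ((s - t) / ((1 - t) * (s - 1))) * ∫ z in (0:ℝ)..1, z * f z := by
  have hs0 : 0 < s := lt_trans one_pos hs
  set a : ℝ := (s - 1) / s with ha_def
  have ha0 : 0 < a := div_pos (by linarith) hs0
  have ha1 : a < 1 := (div_lt_one hs0).mpr (by linarith)
  set E : ℝ := ∫ z in (0:ℝ)..1, z * f z with hE_def
  set I : ℝ := ∫ z in a..1, z * f z with hI_def
  have hgcont : ContinuousOn (fun z : ℝ => z * f z) (Set.Icc 0 1) :=
    (continuousOn_id).mul hfcont
  have hint1 : IntervalIntegrable (fun z : ℝ => z * f z) MeasureTheory.volume 0 a := by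
    apply ContinuousOn.intervalIntegrable
    apply hgcont.mono
    rw [Set.uIcc_of_le ha0.le]
    exact Set.Icc_subset_Icc le_rfl ha1.le
  have hint2 : IntervalIntegrable (fun z : ℝ => z * f z) MeasureTheory.volume a 1 := by
    apply ContinuousOn.intervalIntegrable
    apply hgcont.mono
    rw [Set.uIcc_of_le ha1.le]
    exact Set.Icc_subset_Icc ha0.le le_rfl
  have hnn : ∀ x ∈ Set.Icc (0:ℝ) 1, 0 ≤ x * f x := fun x hx =>
    mul_nonneg hx.1 (hfnonneg x hx)
  have hE0 : (0:ℝ) ≤ ∫ z in (0:ℝ)..a, z * f z := by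
    apply intervalIntegral.integral_nonneg ha0.le
    intro x hx
    exact hnn x ⟨hx.1, le_trans hx.2 ha1.le⟩
  have hI0 : (0:ℝ) ≤ I := by
    apply intervalIntegral.integral_nonneg ha1.le
    intro x hx
    exact hnn x ⟨le_trans ha0.le hx.1, hx.2⟩
  have hsplit : (∫ z in (0:ℝ)..a, z * f z) + I = E :=
    intervalIntegral.integral_add_adjacent_intervals hint1 hint2
  have hIE : I ≤ E := by linarith
  have hE0' : (0:ℝ) ≤ E := le_trans hI0 hIE
  have hstep : a * I ≤ (s / (s - 1)) * E := by
    have h1 : a * I ≤ I := by nlinarith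
    have h2 : E ≤ (s / (s - 1)) * E := by
      have : (1:ℝ) ≤ s / (s - 1) := (one_le_div (by linarith)).mpr (by linarith)
      nlinarith
    linarith
  have hC : (s - t) / ((1 - t) * (s - 1)) = t / (1 - t) + s / (s - 1) := by
    have h1 : (1 : ℝ) - t ≠ 0 := by linarith
    have h2 : s - 1 ≠ 0 := by linarith
    field_simp
    ring
  rw [hC]
  calc F a + a * I ≤ t / (1 - t) * E + s / (s - 1) * E := by linarith
    _ = (t / (1 - t) + s / (s - 1)) * E := by ring
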